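/- Let Ω ⊂ ℝ^N be a Lipschitz domain, 1 ≤ q ≤ p < ∞ with p > 1, and (u_n) a bounded sequence in X = W₀^{1,p}(Ω;ℝ^M) ∩ W₀^{1,q}(Ω;ℝ^M) satisfying the uniform tail-smallness condition: for every ε > 0 there is j₀ with ‖(φ^{(2)}_n − φ^{(2)}_j)(u_n)‖_X < ε for all n > j ≥ j₀, where φ^{(2)}_n denotes component-wise Lipschitz truncation at level n. Then (φ^{(2)}_n(u_n)) does not concentrate in W^{1,p}(Ω;ℝ^M); if in addition p < N, then (φ^{(2)}_n(u_n)) does not concentrate in L^{p*}(Ω;ℝ^M), p* = pN/(N−p). -/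

import Mathlib

open MeasureTheory Set Filter Metric
open scoped ENNReal NNReal Topology

/-- A Lipschitz domain: an open connected set whose boundary is covered, uniformly, by
countably many balls on which the boundary can be straightened by `L`-bilipschitz maps to a
half-ball, with bounded overlap `K₀` and uniform scale `ρ`. -/
def IsLipschitzDomain {N : ℕ} (hN : 0 < N) (Ω : Set (EuclideanSpace ℝ (Fin N))) : Prop :=
  IsOpen Ω ∧ IsConnected Ω ∧
  ∃ (ρ L : ℝ) (K₀ : ℕ) (Y : Set (EuclideanSpace ℝ (Fin N)))
    (r : EuclideanSpace ℝ (Fin N) → ℝ)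
    (θ θinv : EuclideanSpace ℝ (Fin N) → EuclideanSpace ℝ (Fin N) → EuclideanSpace ℝ (Fin N)),
    0 < ρ ∧ 1 ≤ L ∧ Y.Countable ∧ Y ⊆ frontier Ω ∧
    (∀ y ∈ Y, 0 < r y ∧
      Set.BijOn (θ y) (ball y (2 * r y)) (ball (0 : EuclideanSpace ℝ (Fin N)) (2 * r y)) ∧
      LipschitzOnWith (Real.toNNReal L) (θ y) (ball y (2 * r y)) ∧
      LipschitzOnWith (Real.toNNReal L) (θinv y)
        (ball (0 : EuclideanSpace ℝ (Fin N)) (2 * r y)) ∧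
      (∀ x ∈ ball y (2 * r y), θinv y (θ y x) = x) ∧
      θ y '' (Ω ∩ ball y (2 * r y)) =
        {x ∈ ball (0 : EuclideanSpace ℝ (Fin N)) (2 * r y) | 0 < x ⟨0, hN⟩}) ∧
    (∀ z ∈ frontier Ω, closure Ω ∩ ball z ρ ⊆ ⋃ y ∈ Y, ball y (r y)) ∧
    (∀ x : EuclideanSpace ℝ (Fin N),
      ({y ∈ Y | x ∈ ball y (r y)}).Finite ∧ ({y ∈ Y | x ∈ ball y (r y)}).ncard ≤ K₀)

set_option linter.unusedSectionVars false
set_option maxHeartbeats 1000000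

set_option maxHeartbeats 4000000

section Helpers

variable {V : Type*} [NormedAddCommGroup V] [NormedSpace ℝ V] [MeasurableSpace V] [BorelSpace V]
  {W : Type*} [NormedAddCommGroup W]

lemma aux_integrable {f : V → W} (hf : Continuous f) (h2 : HasCompactSupport f) {r : ℝ}
    (hr : 0 < r) (μ : Measure V) [IsFiniteMeasureOnCompacts μ] :
    Integrable (fun x => ‖f x‖ ^ r) μ := by
  have hc : Continuous fun x => ‖f x‖ ^ r := hf.norm.rpow_const (fun x => Or.inr hr.le)
  have hs : HasCompactSupport fun x => ‖f x‖ ^ r := by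
    have h0 : (fun y : W => ‖y‖ ^ r) 0 = 0 := by simp [Real.zero_rpow hr.ne']
    exact h2.comp_left (g := fun y : W => ‖y‖ ^ r) h0
  exact hc.integrable_of_hasCompactSupport hs

lemma aux_lintegral_norm_rpow {f : V → W} (hf : Continuous f) (h2 : HasCompactSupport f) {r : ℝ}
    (hr : 0 < r) (μ : Measure V) [IsFiniteMeasureOnCompacts μ] :
    ∫⁻ x, ‖f x‖ₑ ^ r ∂μ = ENNReal.ofReal (∫ x, ‖f x‖ ^ r ∂μ) := by
  rw [ofReal_integral_eq_lintegral_ofReal (aux_integrable hf h2 hr μ)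
    (ae_of_all _ fun x => by positivity)]
  refine lintegral_congr fun x => ?_
  rw [← ENNReal.ofReal_rpow_of_nonneg (norm_nonneg _) hr.le, ofReal_norm_eq_enorm]

lemma aux_rpow_add {a b r : ℝ} (ha : 0 ≤ a) (hb : 0 ≤ b) (hr : 0 ≤ r) :
    (a + b) ^ r ≤ 2 ^ r * (a ^ r + b ^ r) := by
  have h1 : a + b ≤ 2 * max a b := by
    rcases le_total a b with h | h
    · simp [max_eq_right h]; linarith
    · simp [max_eq_left h]; linarith
  have h2 : (a + b) ^ r ≤ (2 * max a b) ^ r :=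
    Real.rpow_le_rpow (by positivity) h1 hr
  have h3 : (2 * max a b) ^ r = 2 ^ r * (max a b) ^ r :=
    Real.mul_rpow (by norm_num) (le_max_of_le_left ha)
  have h4 : (max a b) ^ r ≤ a ^ r + b ^ r := by
    rcases le_total a b with h | h
    · rw [max_eq_right h]; nlinarith [Real.rpow_nonneg ha r]
    · rw [max_eq_left h]; nlinarith [Real.rpow_nonneg hb r]
  calc (a + b) ^ r ≤ 2 ^ r * (max a b) ^ r := by rw [← h3]; exact h2
    _ ≤ 2 ^ r * (a ^ r + b ^ r) := by
        have : (0:ℝ) < 2 ^ r := Real.rpow_pos_of_pos (by norm_num) r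
        nlinarith

lemma aux_rpow_inv_rpow {a r : ℝ} (ha : 0 ≤ a) (hr : r ≠ 0) : (a ^ (1/r)) ^ r = a := by
  rw [← Real.rpow_mul ha, one_div, inv_mul_cancel₀ hr, Real.rpow_one]

lemma aux_rpow_rpow_inv {a r : ℝ} (ha : 0 ≤ a) (hr : r ≠ 0) : (a ^ r) ^ (1/r) = a := by
  rw [← Real.rpow_mul ha, mul_one_div, div_self hr, Real.rpow_one]

lemma aux_lt_of_rpow_lt {a b r : ℝ} (ha : 0 ≤ a) (hr : 0 < r) (h : a ^ (1/r) < b) :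
    a < b ^ r := by
  have h' := Real.rpow_lt_rpow (Real.rpow_nonneg ha _) h hr
  rwa [aux_rpow_inv_rpow ha hr.ne'] at h'

end Helpers

lemma aux_sobolev {N M : ℕ} (hN : 0 < N) {p r : ℝ} (hp1 : 1 ≤ p) (hpN : p < (N:ℝ))
    (hr : r = p * N / ((N:ℝ) - p)) {f : EuclideanSpace ℝ (Fin N) → EuclideanSpace ℝ (Fin M)}
    (hf : ContDiff ℝ 1 f) (h2 : HasCompactSupport f) :
    ∫ x, ‖f x‖ ^ r ≤
      (((eLpNormLESNormFDerivOfEqInnerConst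
          (volume : Measure (EuclideanSpace ℝ (Fin N))) p : ℝ)) *
        (∫ x, ‖fderiv ℝ f x‖ ^ p) ^ (1/p)) ^ r := by
  have hp0 : (0:ℝ) < p := lt_of_lt_of_le zero_lt_one hp1
  have hNp : (0:ℝ) < (N:ℝ) - p := by linarith
  have hN0 : (0:ℝ) < (N:ℝ) := lt_trans hp0 hpN
  have hrpos : (0:ℝ) < r := by rw [hr]; positivity
  set pn : ℝ≥0 := p.toNNReal with hpn_def
  set rn : ℝ≥0 := r.toNNReal with hrn_def
  have hpn : (pn:ℝ) = p := Real.coe_toNNReal _ hp0.le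
  have hrn : (rn:ℝ) = r := Real.coe_toNNReal _ hrpos.le
  have hpn0 : pn ≠ 0 := by
    intro h; rw [← hpn] at hp0; rw [h] at hp0; simp at hp0
  have hrn0 : rn ≠ 0 := by
    intro h; rw [← hrn] at hrpos; rw [h] at hrpos; simp at hrpos
  have hfin : Module.finrank ℝ (EuclideanSpace ℝ (Fin N)) = N := finrank_euclideanSpace_fin
  have hp' : ((rn:ℝ))⁻¹ = (pn:ℝ)⁻¹ - ((Module.finrank ℝ (EuclideanSpace ℝ (Fin N)) : ℝ))⁻¹ := by
    rw [hfin, hpn, hrn, hr]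
    rw [inv_div]
    field_simp
  have hpn1 : 1 ≤ pn := by rw [← NNReal.coe_le_coe, hpn, NNReal.coe_one]; exact hp1
  have sob := eLpNorm_le_eLpNorm_fderiv_of_eq_inner (μ := volume) hf h2 hpn1
    (by rw [hfin]; exact hN) hp'
  rw [eLpNorm_nnreal_eq_lintegral hrn0, eLpNorm_nnreal_eq_lintegral hpn0, hpn, hrn,
    aux_lintegral_norm_rpow hf.continuous h2 hrpos,
    aux_lintegral_norm_rpow (ContDiff.continuous_fderiv hf one_ne_zero) (h2.fderiv ℝ) hp0] at sob
  set c : ℝ := ((eLpNormLESNormFDerivOfEqInnerConst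
      (volume : Measure (EuclideanSpace ℝ (Fin N))) p : ℝ)) with hc_def
  set I' : ℝ := ∫ x, ‖f x‖ ^ r with hI'
  set Ig : ℝ := ∫ x, ‖fderiv ℝ f x‖ ^ p with hIg
  have hI'0 : 0 ≤ I' := integral_nonneg fun x => by positivity
  have hIg0 : 0 ≤ Ig := integral_nonneg fun x => by positivity
  have sob2 := ENNReal.rpow_le_rpow sob hrpos.le
  rw [← ENNReal.rpow_mul, one_div, inv_mul_cancel₀ hrpos.ne', ENNReal.rpow_one] at sob2
  have hre : (eLpNormLESNormFDerivOfEqInnerConst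
      (volume : Measure (EuclideanSpace ℝ (Fin N))) p : ℝ≥0∞) *
      (ENNReal.ofReal Ig) ^ (1/p) = ENNReal.ofReal (c * Ig ^ (1/p)) := by
    rw [ENNReal.ofReal_mul (by positivity), ← ENNReal.ofReal_rpow_of_nonneg hIg0 (by positivity),
      ENNReal.ofReal_coe_nnreal]
  rw [hre, ENNReal.ofReal_rpow_of_nonneg (by positivity) hrpos.le] at sob2
  exact (ENNReal.ofReal_le_ofReal_iff (by positivity)).1 sob2


/-- Let `(u_n)` be bounded in `X = W₀^{1,p} ∩ W₀^{1,q}` and let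
`w m n = φ^{(2)}_m(u_n)` denote the Lipschitz truncations at level `m` (satisfying the
pointwise bound `|w m n| + |∇(w m n)| ≤ C₀ m` and agreeing with `u_n` off a set of measure
`≲ m^{−p}`). If the uniform tail-smallness condition holds — for every `ε > 0` there is
`j₀` with `‖w n n − w j n‖_X < ε` for all `n > j ≥ j₀` — then `(w n n)_n` does not
concentrate in `W^{1,p}(Ω;ℝ^M)`; if moreover `p < N`, it does not concentrate in
`L^{p*}(Ω;ℝ^M)` with `p* = pN/(N−p)`. -/
theorem lipschitz_truncations_do_not_concentrate {N M : ℕ} (hN : 0 < N)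
    (Ω : Set (EuclideanSpace ℝ (Fin N))) (hΩ : IsLipschitzDomain hN Ω)
    (p q : ℝ) (hq1 : 1 ≤ q) (hqp : q ≤ p) (hp1 : 1 < p)
    (u : ℕ → EuclideanSpace ℝ (Fin N) → EuclideanSpace ℝ (Fin M))
    (hureg : ∀ n, ContDiff ℝ 1 (u n) ∧ HasCompactSupport (u n) ∧ tsupport (u n) ⊆ Ω)
    (B : ℝ)
    (huB : ∀ n,
      (∫ x in Ω, (‖u n x‖ ^ p + ‖fderiv ℝ (u n) x‖ ^ p)) ^ (1/p) +
      (∫ x in Ω, (‖u n x‖ ^ q + ‖fderiv ℝ (u n) x‖ ^ q)) ^ (1/q) ≤ B)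
    (w : ℕ → ℕ → EuclideanSpace ℝ (Fin N) → EuclideanSpace ℝ (Fin M))
    (hwreg : ∀ m n, ContDiff ℝ 1 (w m n) ∧ HasCompactSupport (w m n) ∧
      tsupport (w m n) ⊆ Ω)
    (C₀ : ℝ) (hC₀ : 1 ≤ C₀)
    (hwbound : ∀ m n, ∀ x ∈ Ω, ‖w m n x‖ + ‖fderiv ℝ (w m n) x‖ ≤ C₀ * m)
    (C₃ : ℝ) (hC₃ : 1 ≤ C₃)
    (hagree : ∀ m n : ℕ, 1 ≤ m →
      volume {x | w m n x ≠ u n x} ≤ ENNReal.ofReal (C₃ ^ p * B ^ p / (m:ℝ) ^ p))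
    (htail : ∀ ε > (0:ℝ), ∃ j₀ : ℕ, ∀ j n : ℕ, j₀ ≤ j → j < n →
      (∫ x in Ω, (‖w n n x - w j n x‖ ^ p +
          ‖fderiv ℝ (w n n) x - fderiv ℝ (w j n) x‖ ^ p)) ^ (1/p) +
      (∫ x in Ω, (‖w n n x - w j n x‖ ^ q +
          ‖fderiv ℝ (w n n) x - fderiv ℝ (w j n) x‖ ^ q)) ^ (1/q) < ε) :
    (∀ ε > (0:ℝ), ∃ δ > (0:ℝ), ∀ n : ℕ, ∀ E : Set (EuclideanSpace ℝ (Fin N)),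
      E ⊆ Ω → MeasurableSet E → volume E ≤ ENNReal.ofReal δ →
      ∫ x in E, (‖w n n x‖ ^ p + ‖fderiv ℝ (w n n) x‖ ^ p) ≤ ε) ∧
    (p < N →
      ∀ ε > (0:ℝ), ∃ δ > (0:ℝ), ∀ n : ℕ, ∀ E : Set (EuclideanSpace ℝ (Fin N)),
        E ⊆ Ω → MeasurableSet E → volume E ≤ ENNReal.ofReal δ →
        ∫ x in E, ‖w n n x‖ ^ (p * N / (N - p)) ≤ ε) := by
  obtain ⟨hΩopen, -⟩ := hΩ
  constructor
  · have hp0 : (0:ℝ) < p := lt_trans zero_lt_one hp1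
    have hq0 : (0:ℝ) < q := lt_of_lt_of_le zero_lt_one hq1
    have hwC : ∀ m n, Continuous (w m n) := fun m n => (hwreg m n).1.continuous
    have hwS : ∀ m n, HasCompactSupport (w m n) := fun m n => (hwreg m n).2.1
    have hwD : ∀ m n, Continuous (fderiv ℝ (w m n)) :=
      fun m n => ContDiff.continuous_fderiv (hwreg m n).1 one_ne_zero
    have hwDS : ∀ m n, HasCompactSupport (fderiv ℝ (w m n)) := fun m n => (hwS m n).fderiv ℝ
    have hIw : ∀ m n, Integrable (fun x => ‖w m n x‖ ^ p) volume :=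
      fun m n => aux_integrable (hwC m n) (hwS m n) hp0 _
    have hIDw : ∀ m n, Integrable (fun x => ‖fderiv ℝ (w m n) x‖ ^ p) volume :=
      fun m n => aux_integrable (hwD m n) (hwDS m n) hp0 _
    have hId : ∀ m n, Integrable (fun x => ‖w n n x - w m n x‖ ^ p) volume := fun m n =>
      aux_integrable ((hwC n n).sub (hwC m n)) ((hwS n n).comp₂_left (hwS m n) (sub_zero 0)) hp0 _
    have hIDd : ∀ m n,
        Integrable (fun x => ‖fderiv ℝ (w n n) x - fderiv ℝ (w m n) x‖ ^ p) volume := fun m n =>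
      aux_integrable ((hwD n n).sub (hwD m n)) ((hwDS n n).comp₂_left (hwDS m n) (sub_zero 0)) hp0 _
    intro ε hε
    set P : ℝ := 2 ^ p with hPdef
    have hP0 : 0 < P := Real.rpow_pos_of_pos (by norm_num) p
    have hP1 : 1 ≤ P := by
      calc (1:ℝ) = 1 ^ p := (Real.one_rpow p).symm
        _ ≤ 2 ^ p := Real.rpow_le_rpow zero_le_one one_le_two hp0.le
    obtain ⟨j₀, hj₀⟩ := htail ((ε / (2*P)) ^ (1/p)) (by positivity)
    set D : ℝ := (C₀ * ((j₀:ℝ)+1)) ^ p with hDdef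
    have hD0 : 0 < D := Real.rpow_pos_of_pos (by positivity) p
    refine ⟨ε / (4*P*D), by positivity, ?_⟩
    intro n E hEΩ hEmeas hEvol
    have hEfin : volume E ≠ ⊤ := (lt_of_le_of_lt hEvol ENNReal.ofReal_lt_top).ne
    have hEtoReal : (volume E).toReal ≤ ε / (4*P*D) := by
      have h := ENNReal.toReal_mono ENNReal.ofReal_ne_top hEvol
      rwa [ENNReal.toReal_ofReal (by positivity)] at h
    -- bound for the integral of a fixed truncation over E
    have hconst : ∀ m : ℕ, (m:ℝ) ≤ (j₀:ℝ) + 1 →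
        ∫ x in E, (‖w m n x‖ ^ p + ‖fderiv ℝ (w m n) x‖ ^ p) ≤ 2 * D * (volume E).toReal := by
      intro m hm
      have hpt : ∀ x ∈ E, ‖w m n x‖ ^ p + ‖fderiv ℝ (w m n) x‖ ^ p ≤ 2 * D := by
        intro x hx
        have hb := hwbound m n x (hEΩ hx)
        have hCm : C₀ * (m:ℝ) ≤ C₀ * ((j₀:ℝ)+1) := by nlinarith
        have h1 : ‖w m n x‖ ≤ C₀ * ((j₀:ℝ)+1) := by
          have := norm_nonneg (fderiv ℝ (w m n) x); linarith
        have h2 : ‖fderiv ℝ (w m n) x‖ ≤ C₀ * ((j₀:ℝ)+1) := by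
          have := norm_nonneg (w m n x); linarith
        have h1p : ‖w m n x‖ ^ p ≤ D := Real.rpow_le_rpow (norm_nonneg _) h1 hp0.le
        have h2p : ‖fderiv ℝ (w m n) x‖ ^ p ≤ D := Real.rpow_le_rpow (norm_nonneg _) h2 hp0.le
        linarith
      have hint : IntegrableOn (fun x => ‖w m n x‖ ^ p + ‖fderiv ℝ (w m n) x‖ ^ p) E volume :=
        ((hIw m n).add (hIDw m n)).integrableOn
      have h := setIntegral_mono_on hint
        (integrableOn_const hEfin) hEmeas hpt
      rwa [setIntegral_const, smul_eq_mul, mul_comm] at h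
    by_cases hn : n ≤ j₀
    · have h := hconst n (by have h' : (n:ℝ) ≤ (j₀:ℝ) := Nat.cast_le.2 hn; linarith)
      calc ∫ x in E, (‖w n n x‖ ^ p + ‖fderiv ℝ (w n n) x‖ ^ p)
          ≤ 2 * D * (volume E).toReal := h
        _ ≤ 2 * D * (ε / (4*P*D)) := by nlinarith
        _ = ε / (2*P) := by field_simp; ring
        _ ≤ ε := div_le_self hε.le (by linarith)
    · -- the tail case
      push_neg at hn
      have htl := hj₀ j₀ n le_rfl hn
      set A : ℝ := ∫ x in Ω, (‖w n n x - w j₀ n x‖ ^ p +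
          ‖fderiv ℝ (w n n) x - fderiv ℝ (w j₀ n) x‖ ^ p) with hAdef
      have hA0 : 0 ≤ A :=
        setIntegral_nonneg hΩopen.measurableSet (fun x _ => by positivity)
      have hB0 : 0 ≤ (∫ x in Ω, (‖w n n x - w j₀ n x‖ ^ q +
          ‖fderiv ℝ (w n n) x - fderiv ℝ (w j₀ n) x‖ ^ q)) ^ (1/q) :=
        Real.rpow_nonneg (setIntegral_nonneg hΩopen.measurableSet (fun x _ => by positivity)) _
      have hAsmall : A < ε / (2*P) := by
        have h1 : A ^ (1/p) < (ε / (2*P)) ^ (1/p) := by linarith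
        have := aux_lt_of_rpow_lt hA0 hp0 h1
        rwa [aux_rpow_inv_rpow (by positivity) hp0.ne'] at this
      -- pointwise estimate
      have hpt : ∀ x, ‖w n n x‖ ^ p + ‖fderiv ℝ (w n n) x‖ ^ p ≤
          P * ((‖w n n x - w j₀ n x‖ ^ p + ‖fderiv ℝ (w n n) x - fderiv ℝ (w j₀ n) x‖ ^ p) +
            (‖w j₀ n x‖ ^ p + ‖fderiv ℝ (w j₀ n) x‖ ^ p)) := by
        intro x
        have e1 : ‖w n n x‖ ≤ ‖w n n x - w j₀ n x‖ + ‖w j₀ n x‖ := by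
          calc ‖w n n x‖ = ‖(w n n x - w j₀ n x) + w j₀ n x‖ := by rw [sub_add_cancel]
            _ ≤ _ := norm_add_le _ _
        have e2 : ‖fderiv ℝ (w n n) x‖ ≤ ‖fderiv ℝ (w n n) x - fderiv ℝ (w j₀ n) x‖ +
            ‖fderiv ℝ (w j₀ n) x‖ := by
          calc ‖fderiv ℝ (w n n) x‖
              = ‖(fderiv ℝ (w n n) x - fderiv ℝ (w j₀ n) x) + fderiv ℝ (w j₀ n) x‖ := by rw [sub_add_cancel]
            _ ≤ _ := norm_add_le _ _
        have f1 : ‖w n n x‖ ^ p ≤ P * (‖w n n x - w j₀ n x‖ ^ p + ‖w j₀ n x‖ ^ p) := by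
          calc ‖w n n x‖ ^ p ≤ (‖w n n x - w j₀ n x‖ + ‖w j₀ n x‖) ^ p :=
                Real.rpow_le_rpow (norm_nonneg _) e1 hp0.le
            _ ≤ _ := aux_rpow_add (norm_nonneg _) (norm_nonneg _) hp0.le
        have f2 : ‖fderiv ℝ (w n n) x‖ ^ p ≤
            P * (‖fderiv ℝ (w n n) x - fderiv ℝ (w j₀ n) x‖ ^ p + ‖fderiv ℝ (w j₀ n) x‖ ^ p) := by
          calc ‖fderiv ℝ (w n n) x‖ ^ p
              ≤ (‖fderiv ℝ (w n n) x - fderiv ℝ (w j₀ n) x‖ + ‖fderiv ℝ (w j₀ n) x‖) ^ p :=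
                Real.rpow_le_rpow (norm_nonneg _) e2 hp0.le
            _ ≤ _ := aux_rpow_add (norm_nonneg _) (norm_nonneg _) hp0.le
        nlinarith
      -- integrate the pointwise estimate over E
      have hIdd : Integrable (fun x => ‖w n n x - w j₀ n x‖ ^ p +
          ‖fderiv ℝ (w n n) x - fderiv ℝ (w j₀ n) x‖ ^ p) volume := (hId j₀ n).add (hIDd j₀ n)
      have hIj : Integrable (fun x => ‖w j₀ n x‖ ^ p + ‖fderiv ℝ (w j₀ n) x‖ ^ p) volume :=
        (hIw j₀ n).add (hIDw j₀ n)
      have step1 : ∫ x in E, (‖w n n x‖ ^ p + ‖fderiv ℝ (w n n) x‖ ^ p) ≤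
          ∫ x in E, P * ((‖w n n x - w j₀ n x‖ ^ p +
            ‖fderiv ℝ (w n n) x - fderiv ℝ (w j₀ n) x‖ ^ p) +
            (‖w j₀ n x‖ ^ p + ‖fderiv ℝ (w j₀ n) x‖ ^ p)) := by
        refine setIntegral_mono_on ((hIw n n).add (hIDw n n)).integrableOn
          ((hIdd.add hIj).const_mul P).integrableOn hEmeas (fun x _ => hpt x)
      have step2 : ∫ x in E, P * ((‖w n n x - w j₀ n x‖ ^ p +
            ‖fderiv ℝ (w n n) x - fderiv ℝ (w j₀ n) x‖ ^ p) +
            (‖w j₀ n x‖ ^ p + ‖fderiv ℝ (w j₀ n) x‖ ^ p)) =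
          P * ((∫ x in E, (‖w n n x - w j₀ n x‖ ^ p +
            ‖fderiv ℝ (w n n) x - fderiv ℝ (w j₀ n) x‖ ^ p)) +
            ∫ x in E, (‖w j₀ n x‖ ^ p + ‖fderiv ℝ (w j₀ n) x‖ ^ p)) := by
        rw [integral_const_mul, integral_add hIdd.integrableOn hIj.integrableOn]
      have step3 : ∫ x in E, (‖w n n x - w j₀ n x‖ ^ p +
          ‖fderiv ℝ (w n n) x - fderiv ℝ (w j₀ n) x‖ ^ p) ≤ A := by
        refine setIntegral_mono_set hIdd.integrableOn
          (Eventually.of_forall (fun x => by positivity)) (HasSubset.Subset.eventuallyLE hEΩ)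
      have step4 : ∫ x in E, (‖w j₀ n x‖ ^ p + ‖fderiv ℝ (w j₀ n) x‖ ^ p) ≤
          2 * D * (volume E).toReal := hconst j₀ (by linarith)
      have hvol : 2 * D * (volume E).toReal ≤ ε / (2*P) := by
        calc 2 * D * (volume E).toReal ≤ 2 * D * (ε / (4*P*D)) := by nlinarith
          _ = ε / (2*P) := by field_simp; ring
      calc ∫ x in E, (‖w n n x‖ ^ p + ‖fderiv ℝ (w n n) x‖ ^ p)
          ≤ P * (A + 2 * D * (volume E).toReal) := by
            rw [step2] at step1
            refine le_trans step1 ?_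
            have := step3; have := step4; nlinarith
        _ ≤ P * (ε / (2*P) + ε / (2*P)) := by nlinarith
        _ = ε := by field_simp; ring
  · intro hpN
    have hp0 : (0:ℝ) < p := lt_trans zero_lt_one hp1
    have hq0 : (0:ℝ) < q := lt_of_lt_of_le zero_lt_one hq1
    have hNp : (0:ℝ) < (N:ℝ) - p := by linarith
    set r : ℝ := p * N / ((N:ℝ) - p) with hrdef
    have hr0 : (0:ℝ) < r := by rw [hrdef]; positivity
    have hr1 : (1:ℝ) ≤ r := by
      rw [hrdef, le_div_iff₀ hNp]; nlinarith
    have hwC : ∀ m n, Continuous (w m n) := fun m n => (hwreg m n).1.continuous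
    have hwS : ∀ m n, HasCompactSupport (w m n) := fun m n => (hwreg m n).2.1
    have hwD : ∀ m n, Continuous (fderiv ℝ (w m n)) :=
      fun m n => ContDiff.continuous_fderiv (hwreg m n).1 one_ne_zero
    have hwDS : ∀ m n, HasCompactSupport (fderiv ℝ (w m n)) := fun m n => (hwS m n).fderiv ℝ
    have hIw : ∀ m n, Integrable (fun x => ‖w m n x‖ ^ r) volume :=
      fun m n => aux_integrable (hwC m n) (hwS m n) hr0 _
    have hId : ∀ m n, Integrable (fun x => ‖w n n x - w m n x‖ ^ r) volume := fun m n =>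
      aux_integrable ((hwC n n).sub (hwC m n)) ((hwS n n).comp₂_left (hwS m n) (sub_zero 0)) hr0 _
    have hIdp : ∀ m n, Integrable (fun x => ‖w n n x - w m n x‖ ^ p) volume := fun m n =>
      aux_integrable ((hwC n n).sub (hwC m n)) ((hwS n n).comp₂_left (hwS m n) (sub_zero 0)) hp0 _
    have hIDdp : ∀ m n,
        Integrable (fun x => ‖fderiv ℝ (w n n) x - fderiv ℝ (w m n) x‖ ^ p) volume := fun m n =>
      aux_integrable ((hwD n n).sub (hwD m n)) ((hwDS n n).comp₂_left (hwDS m n) (sub_zero 0)) hp0 _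
    set c : ℝ := ((eLpNormLESNormFDerivOfEqInnerConst
        (volume : Measure (EuclideanSpace ℝ (Fin N))) p : ℝ)) with hc_def
    have hc0 : 0 ≤ c := (eLpNormLESNormFDerivOfEqInnerConst _ p).coe_nonneg
    set Cr : ℝ := c + 1 with hCr_def
    have hCr0 : 0 < Cr := by rw [hCr_def]; linarith
    intro ε hε
    set P : ℝ := 2 ^ r with hPdef
    have hP0 : 0 < P := Real.rpow_pos_of_pos (by norm_num) r
    have hP1 : 1 ≤ P := by
      calc (1:ℝ) = 1 ^ r := (Real.one_rpow r).symm
        _ ≤ 2 ^ r := Real.rpow_le_rpow zero_le_one one_le_two hr0.le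
    set ε₁ : ℝ := ((ε/(2*P)) ^ (1/r)) / Cr with hε₁def
    have hε₁0 : 0 < ε₁ := by
      rw [hε₁def]
      apply div_pos (Real.rpow_pos_of_pos (by positivity) _) hCr0
    obtain ⟨j₀, hj₀⟩ := htail ε₁ hε₁0
    set D : ℝ := (C₀ * ((j₀:ℝ)+1)) ^ r with hDdef
    have hD0 : 0 < D := Real.rpow_pos_of_pos (by positivity) r
    refine ⟨ε / (2*P*D), by positivity, ?_⟩
    intro n E hEΩ hEmeas hEvol
    have hEfin : volume E ≠ ⊤ := (lt_of_le_of_lt hEvol ENNReal.ofReal_lt_top).ne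
    have hEtoReal : (volume E).toReal ≤ ε / (2*P*D) := by
      have h := ENNReal.toReal_mono ENNReal.ofReal_ne_top hEvol
      rwa [ENNReal.toReal_ofReal (by positivity)] at h
    have hconst : ∀ m : ℕ, (m:ℝ) ≤ (j₀:ℝ) + 1 →
        ∫ x in E, ‖w m n x‖ ^ r ≤ D * (volume E).toReal := by
      intro m hm
      have hpt : ∀ x ∈ E, ‖w m n x‖ ^ r ≤ D := by
        intro x hx
        have hb := hwbound m n x (hEΩ hx)
        have hCm : C₀ * (m:ℝ) ≤ C₀ * ((j₀:ℝ)+1) := by nlinarith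
        have h1 : ‖w m n x‖ ≤ C₀ * ((j₀:ℝ)+1) := by
          have := norm_nonneg (fderiv ℝ (w m n) x); linarith
        exact Real.rpow_le_rpow (norm_nonneg _) h1 hr0.le
      have h := setIntegral_mono_on (hIw m n).integrableOn
        (integrableOn_const hEfin) hEmeas hpt
      rwa [setIntegral_const, smul_eq_mul, mul_comm] at h
    by_cases hn : n ≤ j₀
    · have h := hconst n (by have h' : (n:ℝ) ≤ (j₀:ℝ) := Nat.cast_le.2 hn; linarith)
      calc ∫ x in E, ‖w n n x‖ ^ r ≤ D * (volume E).toReal := h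
        _ ≤ D * (ε / (2*P*D)) := by nlinarith
        _ = ε / (2*P) := by field_simp
        _ ≤ ε := div_le_self hε.le (by linarith)
    · push_neg at hn
      have htl := hj₀ j₀ n le_rfl hn
      set A : ℝ := ∫ x in Ω, (‖w n n x - w j₀ n x‖ ^ p +
          ‖fderiv ℝ (w n n) x - fderiv ℝ (w j₀ n) x‖ ^ p) with hAdef
      have hA0 : 0 ≤ A :=
        setIntegral_nonneg hΩopen.measurableSet (fun x _ => by positivity)
      have hB0 : 0 ≤ (∫ x in Ω, (‖w n n x - w j₀ n x‖ ^ q +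
          ‖fderiv ℝ (w n n) x - fderiv ℝ (w j₀ n) x‖ ^ q)) ^ (1/q) :=
        Real.rpow_nonneg (setIntegral_nonneg hΩopen.measurableSet (fun x _ => by positivity)) _
      have hAsmall : A < ε₁ ^ p := by
        have h1 : A ^ (1/p) < ε₁ := by linarith
        exact aux_lt_of_rpow_lt hA0 hp0 h1
      -- the difference function and its derivative
      set d : EuclideanSpace ℝ (Fin N) → EuclideanSpace ℝ (Fin M) :=
        fun x => w n n x - w j₀ n x with hd_def
      have hdC : ContDiff ℝ 1 d := (hwreg n n).1.sub (hwreg j₀ n).1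
      have hdS : HasCompactSupport d := (hwS n n).comp₂_left (hwS j₀ n) (sub_zero 0)
      have hfd : fderiv ℝ d = fun x => fderiv ℝ (w n n) x - fderiv ℝ (w j₀ n) x :=
        funext fun x => fderiv_sub ((hwreg n n).1.differentiable one_ne_zero x)
          ((hwreg j₀ n).1.differentiable one_ne_zero x)
      set Ig : ℝ := ∫ x, ‖fderiv ℝ (w n n) x - fderiv ℝ (w j₀ n) x‖ ^ p with hIg_def
      have hIg0 : 0 ≤ Ig := integral_nonneg fun x => by positivity
      -- `Ig ≤ A`
      have hIgA : Ig ≤ A := by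
        have hvan : ∀ x ∉ Ω, ‖fderiv ℝ (w n n) x - fderiv ℝ (w j₀ n) x‖ ^ p = 0 := by
          intro x hx
          have hz : ∀ m : ℕ, fderiv ℝ (w m n) x = 0 := by
            intro m
            by_contra hzz
            exact hx ((hwreg m n).2.2 (support_fderiv_subset ℝ (Function.mem_support.2 hzz)))
          rw [hz n, hz j₀, sub_zero, norm_zero, Real.zero_rpow hp0.ne']
        have heq : Ig = ∫ x in Ω, ‖fderiv ℝ (w n n) x - fderiv ℝ (w j₀ n) x‖ ^ p :=
          (setIntegral_eq_integral_of_forall_compl_eq_zero hvan).symm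
        have hsplit : A = (∫ x in Ω, ‖w n n x - w j₀ n x‖ ^ p) +
            ∫ x in Ω, ‖fderiv ℝ (w n n) x - fderiv ℝ (w j₀ n) x‖ ^ p := by
          rw [hAdef]
          exact integral_add (hIdp j₀ n).integrableOn (hIDdp j₀ n).integrableOn
        have hfirst : 0 ≤ ∫ x in Ω, ‖w n n x - w j₀ n x‖ ^ p :=
          setIntegral_nonneg hΩopen.measurableSet (fun x _ => by positivity)
        rw [heq]; linarith
      -- Sobolev estimate
      have hsob := aux_sobolev hN hp1.le hpN hrdef hdC hdS
      rw [hfd] at hsob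
      have hIgsmall : Ig ^ (1/p) ≤ ε₁ := by
        have h1 : Ig ≤ ε₁ ^ p := le_of_lt (lt_of_le_of_lt hIgA hAsmall)
        have h2 := Real.rpow_le_rpow hIg0 h1 (by positivity : (0:ℝ) ≤ 1/p)
        rwa [aux_rpow_rpow_inv hε₁0.le hp0.ne'] at h2
      have hdglobal : ∫ x, ‖d x‖ ^ r ≤ ε / (2*P) := by
        have h1 : c * Ig ^ (1/p) ≤ Cr * ((ε/(2*P)) ^ (1/r) / Cr) := by
          rw [mul_div_cancel₀ _ hCr0.ne']
          calc c * Ig ^ (1/p) ≤ Cr * ε₁ := by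
                apply mul_le_mul (by rw [hCr_def]; linarith) hIgsmall
                  (Real.rpow_nonneg hIg0 _) hCr0.le
            _ = (ε/(2*P)) ^ (1/r) := by rw [hε₁def, mul_div_cancel₀ _ hCr0.ne']
        rw [mul_div_cancel₀ _ hCr0.ne'] at h1
        calc ∫ x, ‖d x‖ ^ r ≤ (c * Ig ^ (1/p)) ^ r := hsob
          _ ≤ ((ε/(2*P)) ^ (1/r)) ^ r := by
              apply Real.rpow_le_rpow (by positivity) h1 hr0.le
          _ = ε/(2*P) := aux_rpow_inv_rpow (by positivity) hr0.ne'
      have hdE : ∫ x in E, ‖w n n x - w j₀ n x‖ ^ r ≤ ε / (2*P) := by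
        refine le_trans (setIntegral_le_integral (hId j₀ n)
          (ae_of_all _ fun x => by positivity)) ?_
        exact hdglobal
      -- pointwise estimate
      have hpt : ∀ x, ‖w n n x‖ ^ r ≤
          P * (‖w n n x - w j₀ n x‖ ^ r + ‖w j₀ n x‖ ^ r) := by
        intro x
        have e1 : ‖w n n x‖ ≤ ‖w n n x - w j₀ n x‖ + ‖w j₀ n x‖ := by
          calc ‖w n n x‖ = ‖(w n n x - w j₀ n x) + w j₀ n x‖ := by rw [sub_add_cancel]
            _ ≤ _ := norm_add_le _ _
        calc ‖w n n x‖ ^ r ≤ (‖w n n x - w j₀ n x‖ + ‖w j₀ n x‖) ^ r :=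
              Real.rpow_le_rpow (norm_nonneg _) e1 hr0.le
          _ ≤ _ := aux_rpow_add (norm_nonneg _) (norm_nonneg _) hr0.le
      have step1 : ∫ x in E, ‖w n n x‖ ^ r ≤
          ∫ x in E, P * (‖w n n x - w j₀ n x‖ ^ r + ‖w j₀ n x‖ ^ r) := by
        refine setIntegral_mono_on (hIw n n).integrableOn
          (((hId j₀ n).add (hIw j₀ n)).const_mul P).integrableOn hEmeas (fun x _ => hpt x)
      have step2 : ∫ x in E, P * (‖w n n x - w j₀ n x‖ ^ r + ‖w j₀ n x‖ ^ r) =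
          P * ((∫ x in E, ‖w n n x - w j₀ n x‖ ^ r) + ∫ x in E, ‖w j₀ n x‖ ^ r) := by
        rw [integral_const_mul, integral_add (hId j₀ n).integrableOn (hIw j₀ n).integrableOn]
      have step4 : ∫ x in E, ‖w j₀ n x‖ ^ r ≤ D * (volume E).toReal := hconst j₀ (by linarith)
      have hvol : D * (volume E).toReal ≤ ε / (2*P) := by
        calc D * (volume E).toReal ≤ D * (ε / (2*P*D)) := by nlinarith
          _ = ε / (2*P) := by field_simp
      calc ∫ x in E, ‖w n n x‖ ^ r
          ≤ P * (ε / (2*P) + ε / (2*P)) := by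
            rw [step2] at step1
            refine le_trans step1 ?_
            have h1 := hdE; have h2 := le_trans step4 hvol
            nlinarith
        _ = ε := by field_simp; ring
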